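/- arXiv:2112.03725 — 2 statements merged into one kernel-verified Lean document; each statement's English description precedes it below -/
import Mathlib

section
/- Let D(r,s) be the covariance double contour integral (see context). For every integer r ≥ 2 one has D(r−1,r) − D(r,r−1) = 1/(r−1). -/
open MeasureTheory Filter Finset

/-- The covariance double contour integral `D(r,s)` of slowed `t`-TASEP:
`D(r,s) = (1/(4π²)) ∮_{|z|=R} ∮_{|w|=ρ} (w/(z−w)) (r!s!/(z^r w^s)) e^{z+w} (1−z/r)(1−w/s) (dz/z)(dw/w)`,
with both circles centered at the origin, traversed counterclockwise, and the inner
integral in `w` performed first. -/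
noncomputable def covD (r s : ℕ) (R ρ : ℝ) : ℂ :=
  (1 / (4 * (Real.pi : ℂ) ^ 2)) *
    ∮ z in C(0, R),
      (∮ w in C(0, ρ),
        w / (z - w) * ((r.factorial : ℂ) * (s.factorial : ℂ) / (z ^ r * w ^ s)) *
          Complex.exp (z + w) * (1 - z / (r : ℂ)) * (1 - w / (s : ℂ)) / w) / z

open Metric Complex


lemma ci_const_exp_zpow {ρ : ℝ} (hρ : 0 < ρ) (c : ℂ) (m : ℤ) :
    CircleIntegrable (fun z : ℂ => c * (Complex.exp z * z ^ m)) 0 ρ := by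
  apply ContinuousOn.circleIntegrable hρ.le
  exact continuousOn_const.mul ((Complex.continuous_exp.continuousOn).mul
    (continuousOn_id.zpow₀ m fun z hz => Or.inl (ne_of_mem_sphere hz hρ.ne')))

lemma ci_exp_zpow' {ρ : ℝ} (hρ : 0 < ρ) (m : ℤ) :
    CircleIntegrable (fun z : ℂ => Complex.exp z * z ^ m) 0 ρ := by
  have := ci_const_exp_zpow hρ 1 m
  simpa using this

lemma cint_exp_zpow {ρ : ℝ} (hρ : 0 < ρ) (n : ℕ) :
    (∮ z in C(0, ρ), Complex.exp z * z ^ (-(n : ℤ) - 1)) =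
      (2 * Real.pi * I) / n.factorial := by
  induction n with
  | zero =>
    have h := (Complex.differentiable_exp.differentiableOn :
        DifferentiableOn ℂ Complex.exp (closedBall (0:ℂ) ρ)).circleIntegral_sub_inv_smul
        (mem_ball_self hρ)
    simp only [smul_eq_mul, Complex.exp_zero, mul_one, sub_zero] at h
    simp only [Nat.cast_zero, neg_zero, zero_sub, Nat.factorial_zero, Nat.cast_one]
    calc (∮ z in C(0, ρ), Complex.exp z * z ^ (-1 : ℤ))
        = ∮ z in C(0, ρ), z⁻¹ * Complex.exp z := by
          apply circleIntegral.integral_congr hρ.le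
          intro z hz; simp [zpow_neg_one]; ring
      _ = 2 * Real.pi * I / 1 := by rw [h]; ring
  | succ n ih =>
    have hder : ∀ z ∈ sphere (0:ℂ) ρ,
        HasDerivWithinAt (fun z : ℂ => Complex.exp z * z ^ (-(n:ℤ) - 1))
          (Complex.exp z * z ^ (-(n:ℤ) - 1)
            - ((n:ℂ) + 1) * (Complex.exp z * z ^ (-(n:ℤ) - 2))) (sphere (0:ℂ) ρ) z := by
      intro z hz
      have hz0 : z ≠ 0 := ne_of_mem_sphere hz hρ.ne'
      have h1 : HasDerivAt (fun z : ℂ => z ^ (-(n:ℤ) - 1))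
          (((-(n:ℤ) - 1 : ℤ) : ℂ) * z ^ (-(n:ℤ) - 1 - 1)) z := hasDerivAt_zpow _ _ (Or.inl hz0)
      have h2 := (Complex.hasDerivAt_exp z).mul h1
      refine HasDerivAt.hasDerivWithinAt ?_
      refine h2.congr_deriv ?_
      have : (-(n:ℤ) - 1 - 1) = (-(n:ℤ) - 2) := by ring
      rw [this]; push_cast; ring
    have hzero := circleIntegral.integral_eq_zero_of_hasDerivWithinAt hρ.le hder
    rw [circleIntegral.integral_sub (ci_exp_zpow' hρ _) (ci_const_exp_zpow hρ _ _),
      circleIntegral.integral_const_mul, ih, sub_eq_zero] at hzero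
    have hne : ((n:ℂ) + 1) ≠ 0 := Nat.cast_add_one_ne_zero n
    have h2 : (∮ z in C(0, ρ), Complex.exp z * z ^ (-(n:ℤ) - 2))
        = 2 * Real.pi * I / (n + 1).factorial := by
      have hf : ((n.factorial : ℕ) : ℂ) ≠ 0 := Nat.cast_ne_zero.mpr n.factorial_ne_zero
      rw [Nat.factorial_succ]; push_cast
      rw [eq_div_iff (mul_ne_zero hne hf)]
      field_simp at hzero
      linear_combination hzero.symm
    have hexp : (-((n:ℕ)+1 : ℤ) - 1) = (-(n:ℤ) - 2) := by push_cast; ring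
    rw [show ((-(((n:ℕ)+1 : ℕ)) : ℤ) - 1) = (-(n:ℤ) - 2) by push_cast; ring]
    exact h2

lemma cint_exp_zero {ρ : ℝ} (hρ : 0 < ρ) (a : ℂ) :
    (∮ z in C(0, ρ), Complex.exp z * (1 - z / a)) = 0 := by
  apply Complex.circleIntegral_eq_zero_of_differentiable_on_off_countable hρ.le
    Set.countable_empty
  · exact ((Complex.continuous_exp).mul (by fun_prop)).continuousOn
  · intro z _
    exact (Complex.differentiable_exp z).mul (by fun_prop)

lemma cint_exp_factor {ρ : ℝ} (hρ : 0 < ρ) (a : ℂ) (n : ℕ) :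
    (∮ z in C(0, ρ), Complex.exp z * (1 - z / a) * z ^ (-(n:ℤ) - 2)) =
      (2 * Real.pi * I) * (1 / (n+1).factorial - (1/a) * (1 / n.factorial)) := by
  have hcongr : (∮ z in C(0, ρ), Complex.exp z * (1 - z / a) * z ^ (-(n:ℤ) - 2)) =
      ∮ z in C(0, ρ), (Complex.exp z * z ^ (-(n:ℤ) - 2)
        - (1/a) * (Complex.exp z * z ^ (-(n:ℤ) - 1))) := by
    apply circleIntegral.integral_congr hρ.le
    intro z hz
    have hz0 : z ≠ 0 := ne_of_mem_sphere hz hρ.ne'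
    have hzz : z ^ (-(n:ℤ) - 1) = z ^ (-(n:ℤ) - 2) * z := by
      rw [← zpow_add_one₀ hz0]; congr 1; ring
    simp only [hzz]; ring
  rw [hcongr, circleIntegral.integral_sub (ci_exp_zpow' hρ _) (ci_const_exp_zpow hρ _ _),
    circleIntegral.integral_const_mul]
  rw [show (-(n:ℤ) - 2) = (-((n+1 : ℕ) : ℤ) - 1) by push_cast; ring, cint_exp_zpow hρ (n+1),
    cint_exp_zpow hρ n]
  ring

lemma cint_exp_factor0 {ρ : ℝ} (hρ : 0 < ρ) (a : ℂ) :
    (∮ z in C(0, ρ), Complex.exp z * (1 - z / a) * z ^ (-1 : ℤ)) = 2 * Real.pi * I := by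
  have h := (((Complex.differentiable_exp).mul (by fun_prop : Differentiable ℂ
      (fun z : ℂ => 1 - z / a))).differentiableOn :
      DifferentiableOn ℂ (fun z => Complex.exp z * (1 - z / a))
        (closedBall (0:ℂ) ρ)).circleIntegral_sub_inv_smul (mem_ball_self hρ)
  simp only [smul_eq_mul, Pi.mul_apply, Complex.exp_zero, sub_zero, zero_div, sub_zero, one_mul, mul_one] at h
  rw [← h]
  apply circleIntegral.integral_congr hρ.le
  intro z hz
  simp [zpow_neg_one]; ring

lemma cint_zero_out {ρ : ℝ} (hρ : 0 < ρ) (a z : ℂ) (hz : ρ < ‖z‖) :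
    (∮ w in C(0, ρ), Complex.exp w * (1 - w / a) * (z - w)⁻¹) = 0 := by
  have hne : ∀ w ∈ closedBall (0:ℂ) ρ, z - w ≠ 0 := by
    intro w hw
    rw [mem_closedBall, dist_zero_right] at hw
    intro h
    rw [sub_eq_zero] at h
    subst h
    exact absurd hw (not_le.mpr hz)
  apply Complex.circleIntegral_eq_zero_of_differentiable_on_off_countable hρ.le
    Set.countable_empty
  · apply ContinuousOn.mul
    · exact ((Complex.continuous_exp).mul (by fun_prop)).continuousOn
    · exact ((continuous_const.sub continuous_id).continuousOn).inv₀ hne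
  · intro w hw
    have : z - w ≠ 0 := hne w (ball_subset_closedBall hw.1)
    apply DifferentiableAt.mul
    · exact (Complex.differentiable_exp w).mul (by fun_prop)
    · exact ((differentiable_const z).sub differentiable_id).differentiableAt.inv this

lemma circleIntegral_finset_sum {ι : Type*} (t : Finset ι) (f : ι → ℂ → ℂ) {c : ℂ} {R : ℝ}
    (h : ∀ i ∈ t, CircleIntegrable (f i) c R) :
    (∮ z in C(c, R), ∑ i ∈ t, f i z) = ∑ i ∈ t, ∮ z in C(c, R), f i z := by
  simp only [circleIntegral, smul_sum]
  exact intervalIntegral.integral_finset_sum fun i hi => (h i hi).out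

lemma pf (s : ℕ) (z w : ℂ) (hz : z ≠ 0) (hw : w ≠ 0) (hzw : z - w ≠ 0) :
    (w ^ s * (z - w))⁻¹ =
      z ^ (-(s:ℤ)) * (z - w)⁻¹ + ∑ j ∈ range s, z ^ ((j:ℤ) - s) * w ^ (-(j:ℤ) - 1) := by
  induction s with
  | zero => simp
  | succ s ih =>
    have hws : (w:ℂ) ^ s ≠ 0 := pow_ne_zero _ hw
    have key' : (w ^ (s+1) : ℂ)⁻¹ + (w ^ s * (z - w))⁻¹ = z * (w ^ (s+1) * (z - w))⁻¹ := by
      rw [pow_succ, mul_inv, mul_inv, mul_inv]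
      field_simp
      ring
    have key : (w ^ (s+1) * (z - w))⁻¹
        = z⁻¹ * (w ^ (s+1) : ℂ)⁻¹ + z⁻¹ * (w ^ s * (z - w))⁻¹ := by
      rw [← mul_add, key', ← mul_assoc, inv_mul_cancel₀ hz, one_mul]
    have h1 : (w ^ (s+1) : ℂ)⁻¹ = w ^ (-(s:ℤ) - 1) := by
      rw [← zpow_natCast w (s+1), ← zpow_neg]
      congr 1; push_cast; ring
    have h2 : z⁻¹ * (z ^ (-(s:ℤ)) * (z - w)⁻¹) = z ^ (-((s:ℕ)+1:ℤ)) * (z - w)⁻¹ := by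
      rw [← mul_assoc, ← zpow_neg_one z, ← zpow_add₀ hz]
      congr 2; push_cast; ring
    have h3 : ∀ j : ℕ, z⁻¹ * (z ^ ((j:ℤ) - s) * w ^ (-(j:ℤ) - 1))
        = z ^ ((j:ℤ) - ((s:ℕ)+1:ℤ)) * w ^ (-(j:ℤ) - 1) := by
      intro j
      rw [← mul_assoc, ← zpow_neg_one z, ← zpow_add₀ hz]
      congr 2; push_cast; ring
    have h4 : z⁻¹ * w ^ (-(s:ℤ) - 1) = z ^ ((s:ℤ) - ((s:ℕ)+1:ℤ)) * w ^ (-(s:ℤ) - 1) := by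
      rw [show ((s:ℤ) - ((s:ℕ)+1:ℤ)) = -1 by push_cast; ring, zpow_neg_one]
    rw [key, ih, sum_range_succ, h1, mul_add, mul_sum, h2, h4,
      sum_congr rfl fun j _ => h3 j]
    push_cast
    ring

noncomputable def icoef (a : ℂ) : ℕ → ℂ
  | 0 => 1
  | (j+1) => 1 / ((j+1).factorial : ℂ) - (1/a) * (1 / (j.factorial : ℂ))

lemma circleIntegral_add {f g : ℂ → ℂ} {c : ℂ} {R : ℝ} (hf : CircleIntegrable f c R)
    (hg : CircleIntegrable g c R) :
    (∮ z in C(c, R), (f z + g z)) = (∮ z in C(c, R), f z) + ∮ z in C(c, R), g z := by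
  simp only [circleIntegral, smul_add]
  exact intervalIntegral.integral_add hf.out hg.out

lemma ci_term1 {ρ : ℝ} (hρ : 0 < ρ) (a z c : ℂ) (hz : ρ < ‖z‖) :
    CircleIntegrable (fun w : ℂ => c * (Complex.exp w * (1 - w / a) * (z - w)⁻¹)) 0 ρ := by
  apply ContinuousOn.circleIntegrable hρ.le
  apply continuousOn_const.mul
  apply ContinuousOn.mul
  · exact ((Complex.continuous_exp).mul (by fun_prop)).continuousOn
  · apply ((continuous_const.sub continuous_id).continuousOn).inv₀
    intro w hw
    rw [mem_sphere_iff_norm, sub_zero] at hw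
    intro h
    simp only [Pi.sub_apply, id, sub_eq_zero] at h
    subst h
    exact absurd hw.le (not_le.mpr hz)

lemma ci_term2 {ρ : ℝ} (hρ : 0 < ρ) (a c : ℂ) (m : ℤ) :
    CircleIntegrable (fun w : ℂ => c * (Complex.exp w * (1 - w / a) * w ^ m)) 0 ρ := by
  apply ContinuousOn.circleIntegrable hρ.le
  apply continuousOn_const.mul
  apply ContinuousOn.mul
  · exact ((Complex.continuous_exp).mul (by fun_prop)).continuousOn
  · exact continuousOn_id.zpow₀ m fun w hw => Or.inl (ne_of_mem_sphere hw hρ.ne')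

lemma iw {ρ : ℝ} (hρ : 0 < ρ) (a : ℂ) (j : ℕ) :
    (∮ w in C(0, ρ), Complex.exp w * (1 - w / a) * w ^ (-(j:ℤ) - 1)) =
      (2 * Real.pi * I) * icoef a j := by
  match j with
  | 0 =>
    rw [show (-((0:ℕ):ℤ) - 1) = (-1 : ℤ) by norm_num, cint_exp_factor0 hρ a]
    simp [icoef]
  | (j+1) =>
    rw [show (-(((j:ℕ)+1:ℕ):ℤ) - 1) = (-(j:ℤ) - 2) by push_cast; ring, cint_exp_factor hρ a j]
    rfl

lemma circleIntegrable_finsetSum {ι : Type*} (t : Finset ι) {f : ι → ℂ → ℂ} {c : ℂ} {R : ℝ}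
    (h : ∀ i ∈ t, CircleIntegrable (f i) c R) :
    CircleIntegrable (fun w => ∑ i ∈ t, f i w) c R := by
  classical
  induction t using Finset.induction with
  | empty => simpa using circleIntegrable_const (0:ℂ) c R
  | @insert x t hx ih =>
    simp only [Finset.sum_insert hx]
    exact (h x (mem_insert_self x t)).add (ih fun i hi => h i (mem_insert_of_mem hi))

lemma inner_eq {ρ : ℝ} (hρ : 0 < ρ) (s : ℕ) (a z : ℂ) (hz : ρ < ‖z‖) :
    (∮ w in C(0, ρ), Complex.exp w * (1 - w / a) * (w ^ s * (z - w))⁻¹) =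
      (2 * Real.pi * I) * ∑ j ∈ range s, z ^ ((j:ℤ) - s) * icoef a j := by
  have hz0 : z ≠ 0 := by
    intro h; subst h; simp only [norm_zero] at hz; linarith
  have hstep : (∮ w in C(0, ρ), Complex.exp w * (1 - w / a) * (w ^ s * (z - w))⁻¹)
      = ∮ w in C(0, ρ), (z ^ (-(s:ℤ)) * (Complex.exp w * (1 - w / a) * (z - w)⁻¹)
          + ∑ j ∈ range s, z ^ ((j:ℤ) - s) * (Complex.exp w * (1 - w / a) * w ^ (-(j:ℤ) - 1))) := by
    apply circleIntegral.integral_congr hρ.le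
    intro w hw
    have hw0 : w ≠ 0 := ne_of_mem_sphere hw hρ.ne'
    have hwρ : ‖w‖ = ρ := by
      rw [mem_sphere_iff_norm, sub_zero] at hw; exact hw
    have hzw : z - w ≠ 0 := by
      intro h; rw [sub_eq_zero] at h; rw [h, hwρ] at hz; exact lt_irrefl _ hz
    simp only
    rw [pf s z w hz0 hw0 hzw, mul_add, mul_sum]
    congr 1
    · ring
    · exact sum_congr rfl fun j _ => by ring
  rw [hstep, circleIntegral_add (ci_term1 hρ a z _ hz)]
  · rw [circleIntegral.integral_const_mul, cint_zero_out hρ a z hz, mul_zero, zero_add]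
    rw [circleIntegral_finset_sum _ _ (fun j _ => ci_term2 hρ a _ _)]
    rw [mul_sum]
    apply sum_congr rfl
    intro j _
    rw [circleIntegral.integral_const_mul, iw hρ a j]
    ring
  · exact circleIntegrable_finsetSum _ (fun j _ => ci_term2 hρ a _ _)

noncomputable def ocoef (r s j : ℕ) : ℂ :=
  1 / (((r+s-j).factorial : ℕ) : ℂ) - (1/(r:ℂ)) * (1 / (((r+s-1-j).factorial : ℕ) : ℂ))

lemma covD_eq (r s : ℕ) {R ρ : ℝ} (hρ : 0 < ρ) (hρR : ρ < R) :
    covD r s R ρ =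
      -((r.factorial : ℂ) * (s.factorial : ℂ)) *
        ∑ j ∈ range s, icoef (s : ℂ) j * ocoef r s j := by
  have hR : 0 < R := hρ.trans hρR
  have houter : (∮ z in C(0, R),
      (∮ w in C(0, ρ),
        w / (z - w) * ((r.factorial : ℂ) * (s.factorial : ℂ) / (z ^ r * w ^ s)) *
          Complex.exp (z + w) * (1 - z / (r : ℂ)) * (1 - w / (s : ℂ)) / w) / z)
      = ∮ z in C(0, R), ∑ j ∈ range s,
          ((2 * Real.pi * I) * ((r.factorial : ℂ) * (s.factorial : ℂ)) * icoef (s : ℂ) j) *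
            (Complex.exp z * (1 - z / (r : ℂ)) * z ^ ((j:ℤ) - s - r - 1)) := by
    apply circleIntegral.integral_congr hR.le
    intro z hz
    beta_reduce
    rw [mem_sphere_iff_norm, sub_zero] at hz
    have hz0 : z ≠ 0 := by
      intro h; rw [h] at hz; simp at hz; linarith
    have hzρ : ρ < ‖z‖ := by rw [hz]; exact hρR
    have hinner : (∮ w in C(0, ρ),
        w / (z - w) * ((r.factorial : ℂ) * (s.factorial : ℂ) / (z ^ r * w ^ s)) *
          Complex.exp (z + w) * (1 - z / (r : ℂ)) * (1 - w / (s : ℂ)) / w)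
        = ∮ w in C(0, ρ),
            ((r.factorial : ℂ) * (s.factorial : ℂ) * Complex.exp z * (1 - z / (r : ℂ))
                * (z ^ r : ℂ)⁻¹) *
              (Complex.exp w * (1 - w / (s : ℂ)) * (w ^ s * (z - w))⁻¹) := by
      apply circleIntegral.integral_congr hρ.le
      intro w hw
      have hw0 : w ≠ 0 := ne_of_mem_sphere hw hρ.ne'
      have hwρ : ‖w‖ = ρ := by
        rw [mem_sphere_iff_norm, sub_zero] at hw; exact hw
      have hzw : z - w ≠ 0 := by
        intro h; rw [sub_eq_zero] at h; rw [h, hwρ] at hzρ; exact lt_irrefl _ hzρ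
      have hzr : (z : ℂ) ^ r ≠ 0 := pow_ne_zero _ hz0
      have hws : (w : ℂ) ^ s ≠ 0 := pow_ne_zero _ hw0
      simp only
      rw [Complex.exp_add]
      field_simp
    rw [hinner, circleIntegral.integral_const_mul, inner_eq hρ s _ z hzρ]
    rw [mul_sum, mul_sum, Finset.sum_div]
    apply sum_congr rfl
    intro j _
    have hcomb : (z ^ r : ℂ)⁻¹ * z ^ ((j:ℤ) - s) * z⁻¹ = z ^ ((j:ℤ) - s - r - 1) := by
      rw [← zpow_natCast z r, ← zpow_neg, ← zpow_neg_one z, ← zpow_add₀ hz0, ← zpow_add₀ hz0]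
      congr 1; push_cast; ring
    rw [div_eq_mul_inv, ← hcomb]
    ring
  rw [covD, houter,
    circleIntegral_finset_sum _ _ (fun j _ => ci_term2 hR ((r:ℕ):ℂ) _ _)]
  have hterm : ∀ j ∈ range s,
      (∮ z in C(0, R),
        ((2 * Real.pi * I) * ((r.factorial : ℂ) * (s.factorial : ℂ)) * icoef (s : ℂ) j) *
          (Complex.exp z * (1 - z / (r : ℂ)) * z ^ ((j:ℤ) - s - r - 1)))
      = ((2 * Real.pi * I) * ((r.factorial : ℂ) * (s.factorial : ℂ)) * icoef (s : ℂ) j) *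
          ((2 * Real.pi * I) * ocoef r s j) := by
    intro j hj
    rw [mem_range] at hj
    rw [circleIntegral.integral_const_mul]
    congr 1
    have hexp : ((j:ℤ) - s - r - 1) = (-(((r+s-1-j : ℕ)):ℤ) - 2) := by
      have : ((r+s-1-j : ℕ) : ℤ) = (r:ℤ) + s - 1 - j := by
        push_cast [Nat.cast_sub (by omega : j ≤ r + s - 1), Nat.cast_sub (by omega : 1 ≤ r + s)]
        ring
      rw [this]; ring
    rw [hexp, cint_exp_factor hR ((r:ℕ):ℂ) _]
    rw [ocoef, show (r+s-1-j) + 1 = r+s-j by omega]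
  beta_reduce
  rw [sum_congr rfl hterm]
  have hpi : ((Real.pi : ℂ)) ≠ 0 := by
    exact_mod_cast Complex.ofReal_ne_zero.mpr Real.pi_ne_zero
  have hconst : (1 / (4 * (Real.pi : ℂ) ^ 2)) * ((2 * Real.pi * I) * (2 * Real.pi * I)) = -1 := by
    have : (I : ℂ) * I = -1 := Complex.I_mul_I
    field_simp
    ring_nf
    rw [Complex.I_sq]
    ring
  rw [mul_sum]
  rw [show -((r.factorial : ℂ) * (s.factorial : ℂ)) *
        ∑ j ∈ range s, icoef (s : ℂ) j * ocoef r s j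
      = ∑ j ∈ range s, -((r.factorial : ℂ) * (s.factorial : ℂ)) * (icoef (s : ℂ) j * ocoef r s j)
    from mul_sum _ _ _]
  apply sum_congr rfl
  intro j _
  linear_combination ((r.factorial : ℂ) * (s.factorial : ℂ) * icoef (s:ℂ) j * ocoef r s j) * hconst

noncomputable def hfun (k j : ℕ) : ℂ :=
  (if j = 0 then 0 else (1 / (((j-1).factorial : ℕ) : ℂ))) *
    (1 / ((((2*k+3-j).factorial : ℕ)) : ℂ))

lemma hfun_zero (k : ℕ) : hfun k 0 = 0 := by simp [hfun]

lemma hfun_succ (k j : ℕ) (hj : j ≤ 2*k+2) :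
    hfun k (j+1) = (1 / ((j.factorial : ℕ) : ℂ)) * (1 / ((((2*k+2-j).factorial : ℕ)) : ℂ)) := by
  rw [hfun, if_neg (Nat.succ_ne_zero _), Nat.add_sub_cancel,
    show 2*k+3-(j+1) = 2*k+2-j by omega]

lemma final_alg (t x : ℂ) (h1 : t+1 ≠ 0) (h2 : t+2 ≠ 0) (hx : x ≠ 0) :
    ((t+2)*(t+1)*x * ((t+1)*x)) *
      ((1/((t+1)*(t+2))) * ((1/x) * (1/((t+2)*(t+1)*x)) - 0)
        - (1/((t+1)*x) - (1/(t+2))*(1/x)) * (1/((t+2)*(t+1)*x) - (1/(t+1))*(1/((t+1)*x))))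
    = 1/(t+1) := by
  have hu : (t+1) * (t+1)⁻¹ = 1 := mul_inv_cancel₀ h1
  have hv : (t+2) * (t+2)⁻¹ = 1 := mul_inv_cancel₀ h2
  have hy : x * x⁻¹ = 1 := mul_inv_cancel₀ hx
  simp only [one_div, mul_inv]
  set a := (t+1)⁻¹
  set b := (t+2)⁻¹
  set y := x⁻¹
  linear_combination
    ((t+2)*(t+1)^2*(a^2*b^2 + a^3 - 2*a^2*b + a*b^2)*(x*y+1)) * hy
    + ((t+2)*(b^2 - 2*b + a)*((t+1)*a + 1) + (t+2)*(t+1)*b^2 + 1) * hu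
    + (b - 2 + (t+1)*b + 1) * hv

lemma inv_diff (a : ℂ) (ha : a ≠ 0) (ha1 : a + 1 ≠ 0) :
    1/a - 1/(a+1) = 1/(a*(a+1)) := by
  field_simp
  ring

lemma alg (a u u' A B : ℂ) (ha : a ≠ 0) (ha1 : a + 1 ≠ 0) :
    (u - (1/a) * u') * (A - (1/(a+1)) * B) - (u - (1/(a+1)) * u') * (A - (1/a) * B)
      = (1/(a*(a+1))) * (u*B - u'*A) := by
  have key := inv_diff a ha ha1
  have expand : (u - (1/a) * u') * (A - (1/(a+1)) * B) - (u - (1/(a+1)) * u') * (A - (1/a) * B)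
      = (1/a - 1/(a+1)) * (u*B - u'*A) := by ring
  rw [expand, key]

/-- For every integer `r ≥ 2`, `D(r−1,r) − D(r,r−1) = 1/(r−1)`. -/
theorem covD_antisym (r : ℕ) (hr : 2 ≤ r) (ρ R : ℝ) (hρ : 0 < ρ) (hρR : ρ < R) :
    covD (r - 1) r R ρ - covD r (r - 1) R ρ = 1 / ((r : ℂ) - 1) := by
  obtain ⟨k, rfl⟩ : ∃ k, r = k + 2 := ⟨r - 2, by omega⟩
  have hred : k + 2 - 1 = k + 1 := rfl
  rw [hred, covD_eq (k+1) (k+2) hρ hρR, covD_eq (k+2) (k+1) hρ hρR]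
  have hK1 : ((k:ℂ) + 1) ≠ 0 := Nat.cast_add_one_ne_zero k
  have hK2 : ((k:ℂ) + 2) ≠ 0 := by
    rw [show ((k:ℂ) + 2) = ((k:ℂ) + 1) + 1 by ring]
    exact fun hcon => Nat.cast_add_one_ne_zero (k+1) (by push_cast; linear_combination hcon)
  have hfac : ∀ n : ℕ, ((n.factorial : ℕ) : ℂ) ≠ 0 :=
    fun n => Nat.cast_ne_zero.mpr (Nat.factorial_ne_zero n)
  have hc1 : (((k+1 : ℕ)) : ℂ) = (k:ℂ) + 1 := by push_cast; ring
  have hc2 : (((k+2 : ℕ)) : ℂ) = (k:ℂ) + 2 := by push_cast; ring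
  -- per-term identity
  have hterm : ∀ j ∈ range (k+1),
      icoef (((k+1:ℕ)) : ℂ) j * ocoef (k+2) (k+1) j
        - icoef (((k+2:ℕ)) : ℂ) j * ocoef (k+1) (k+2) j
      = (1 / (((k:ℂ)+1) * ((k:ℂ)+2))) * (hfun k (j+1) - hfun k j) := by
    intro j hj
    rw [mem_range] at hj
    match j with
    | 0 =>
      have e2 : (k+2) + (k+1) - 0 = 2*k+3 := by omega
      have e2' : (k+1) + (k+2) - 0 = 2*k+3 := by omega
      have e3 : (k+2) + (k+1) - 1 - 0 = 2*k+2 := by omega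
      have e3' : (k+1) + (k+2) - 1 - 0 = 2*k+2 := by omega
      rw [hfun_zero, hfun_succ k 0 (by omega)]
      simp only [icoef, ocoef, e2, e2', e3, e3', hc1, hc2, Nat.factorial_zero, Nat.cast_one,
        Nat.sub_zero]
      have hd := inv_diff ((k:ℂ)+1) hK1 (by rw [show ((k:ℂ)+1)+1 = (k:ℂ)+2 by ring]; exact hK2)
      rw [show ((k:ℂ)+1)+1 = (k:ℂ)+2 by ring] at hd
      linear_combination (1 / ((((2*k+2).factorial : ℕ)) : ℂ)) * hd
    | (j'+1) =>
      have e1 : (k+2) + (k+1) - (j'+1) = 2*k+2-j' := by omega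
      have e1' : (k+1) + (k+2) - (j'+1) = 2*k+2-j' := by omega
      have e2 : (k+2) + (k+1) - 1 - (j'+1) = 2*k+1-j' := by omega
      have e2' : (k+1) + (k+2) - 1 - (j'+1) = 2*k+1-j' := by omega
      have e4 : 2*k+2-(j'+1) = 2*k+1-j' := by omega
      rw [hfun_succ k (j'+1) (by omega), hfun_succ k j' (by omega), e4]
      simp only [icoef, ocoef, e1, e1', e2, e2', hc1, hc2]
      have halg := alg ((k:ℂ)+1) (1 / ((((j'+1).factorial : ℕ)) : ℂ))
        (1 / (((j'.factorial : ℕ)) : ℂ)) (1 / ((((2*k+2-j').factorial : ℕ)) : ℂ))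
        (1 / ((((2*k+1-j').factorial : ℕ)) : ℂ)) hK1
        (by rw [show ((k:ℂ)+1)+1 = (k:ℂ)+2 by ring]; exact hK2)
      rw [show ((k:ℂ)+1)+1 = (k:ℂ)+2 by ring] at halg
      linear_combination halg
  -- assemble
  rw [sum_range_succ]
  have htel : ∑ j ∈ range (k+1), (hfun k (j+1) - hfun k j) = hfun k (k+1) - hfun k 0 :=
    Finset.sum_range_sub (hfun k) (k+1)
  have hsum : ∑ j ∈ range (k+1), icoef (((k+1:ℕ)) : ℂ) j * ocoef (k+2) (k+1) j
      - ∑ j ∈ range (k+1), icoef (((k+2:ℕ)) : ℂ) j * ocoef (k+1) (k+2) j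
      = (1 / (((k:ℂ)+1) * ((k:ℂ)+2))) * (hfun k (k+1) - hfun k 0) := by
    rw [← Finset.sum_sub_distrib, sum_congr rfl hterm, ← Finset.mul_sum, htel]
  have hhk : hfun k (k+1)
      = (1 / ((k.factorial : ℕ) : ℂ)) * (1 / (((k+2).factorial : ℕ) : ℂ)) := by
    rw [hfun_succ k k (by omega), show 2*k+2-k = k+2 by omega]
  have htop : icoef (((k+2:ℕ)) : ℂ) (k+1) * ocoef (k+1) (k+2) (k+1)
      = (1 / (((k+1).factorial : ℕ) : ℂ) - (1/((k:ℂ)+2)) * (1 / ((k.factorial : ℕ) : ℂ)))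
        * (1 / (((k+2).factorial : ℕ) : ℂ) - (1/((k:ℂ)+1)) * (1 / (((k+1).factorial : ℕ) : ℂ))) := by
    have e1 : (k+1) + (k+2) - (k+1) = k+2 := by omega
    have e2 : (k+1) + (k+2) - 1 - (k+1) = k+1 := by omega
    simp only [icoef, ocoef, e1, e2, hc1, hc2]
  have hf1 : (((k+1).factorial : ℕ) : ℂ) = ((k:ℂ)+1) * ((k.factorial : ℕ) : ℂ) := by
    rw [Nat.factorial_succ]; push_cast; ring
  have hf2 : (((k+2).factorial : ℕ) : ℂ) = ((k:ℂ)+2) * ((k:ℂ)+1) * ((k.factorial : ℕ) : ℂ) := by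
    rw [show k+2 = (k+1)+1 by omega, Nat.factorial_succ, Nat.factorial_succ]; push_cast; ring
  have hrhs : ((((k+2:ℕ)) : ℂ) - 1) = (k:ℂ) + 1 := by push_cast; ring
  calc -(((k + 1).factorial : ℂ) * ((k + 2).factorial : ℂ)) *
        (∑ j ∈ range (k+1), icoef (((k+2:ℕ)) : ℂ) j * ocoef (k+1) (k+2) j
          + icoef (((k+2:ℕ)) : ℂ) (k+1) * ocoef (k+1) (k+2) (k+1))
      - -(((k + 2).factorial : ℂ) * ((k + 1).factorial : ℂ)) *
        ∑ j ∈ range (k+1), icoef (((k+1:ℕ)) : ℂ) j * ocoef (k+2) (k+1) j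
      = (((k + 2).factorial : ℂ) * ((k + 1).factorial : ℂ)) *
          ((∑ j ∈ range (k+1), icoef (((k+1:ℕ)) : ℂ) j * ocoef (k+2) (k+1) j
            - ∑ j ∈ range (k+1), icoef (((k+2:ℕ)) : ℂ) j * ocoef (k+1) (k+2) j)
           - icoef (((k+2:ℕ)) : ℂ) (k+1) * ocoef (k+1) (k+2) (k+1)) := by ring
    _ = 1 / ((((k+2:ℕ)) : ℂ) - 1) := by
        rw [hsum, hfun_zero, hhk, htop, hf1, hf2, hrhs]
        exact final_alg (k:ℂ) ((k.factorial : ℕ) : ℂ) hK1 hK2 (hfac k)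
end

section
/- For all natural numbers a, b ≥ 0 and all radii 0 < ρ < R, the two iterated contour integrals (1/(2πi)²) ∮_{|z|=R} ∮_{|w|=ρ} (w/(z−w)) · e^{z+w} · z^{−a−1} w^{−b−1} dw dz and (1/(2πi)²) ∮_{|z|=R} ∮_{|w|=ρ} (w/(z−w)) · ((z+w)^{a+b}/(a+b)!) · z^{−a−1} w^{−b−1} dw dz are equal. -/
open MeasureTheory Complex
open Metric Finset

private lemma two_pi_I_ne : (2 * (Real.pi:ℂ) * I) ≠ 0 := by
  simp [Real.pi_ne_zero, I_ne_zero]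

/-- circle integral of a finite sum -/
private lemma circle_sum {ι : Type*} (s : Finset ι) (f : ι → ℂ → ℂ) (c : ℂ) (r : ℝ)
    (h : ∀ i ∈ s, CircleIntegrable (f i) c r) :
    (∮ z in C(c, r), ∑ i ∈ s, f i z) = ∑ i ∈ s, ∮ z in C(c, r), f i z := by
  simp only [circleIntegral, smul_sum]
  exact intervalIntegral.integral_finset_sum fun i hi => (h i hi).out

private lemma circle_add (f g : ℂ → ℂ) (c : ℂ) (r : ℝ)
    (hf : CircleIntegrable f c r) (hg : CircleIntegrable g c r) :
    (∮ z in C(c, r), f z + g z) = (∮ z in C(c, r), f z) + ∮ z in C(c, r), g z := by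
  simp only [circleIntegral, smul_add]
  exact intervalIntegral.integral_add hf.out hg.out

/-- Cauchy coefficients of exp -/
private lemma exp_coeff (r : ℝ) (hr : 0 < r) (n : ℕ) :
    (∮ z in C((0:ℂ), r), Complex.exp z / z ^ (n + 1)) = 2 * Real.pi * I * ((n.factorial : ℂ))⁻¹ := by
  lift r to NNReal using hr.le with r' hr'
  have hd : DifferentiableOn ℂ Complex.exp (closedBall (0:ℂ) r') :=
    Complex.differentiable_exp.differentiableOn
  have h1 := (hd.hasFPowerSeriesOnBall (by exact_mod_cast hr)).hasFPowerSeriesAt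
  have h2 : HasFPowerSeriesAt Complex.exp (NormedSpace.expSeries ℂ ℂ) 0 := by
    rw [Complex.exp_eq_exp_ℂ]; exact NormedSpace.exp_hasFPowerSeriesAt_zero
  have h3 := h1.eq_formalMultilinearSeries h2
  have h4 : (cauchyPowerSeries Complex.exp 0 r' n fun _ => (1:ℂ))
      = (NormedSpace.expSeries ℂ ℂ n fun _ => (1:ℂ)) := by rw [h3]
  rw [cauchyPowerSeries_apply, NormedSpace.expSeries_apply_eq] at h4
  simp only [one_pow, smul_eq_mul, mul_one, sub_zero] at h4
  have h5 : (∮ z in C((0:ℂ), (r':ℝ)), (1 / z) ^ n * (z⁻¹ * Complex.exp z))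
      = ∮ z in C((0:ℂ), (r':ℝ)), Complex.exp z / z ^ (n + 1) := by
    refine circleIntegral.integral_congr hr.le fun z hz => ?_
    have hz0 : z ≠ 0 := by
      simp only [mem_sphere_iff_norm, sub_zero] at hz
      intro h; rw [h] at hz; simp at hz; exact hr.ne' hz.symm
    field_simp [pow_succ]
    rw [one_div, inv_pow, pow_succ, ← mul_assoc, inv_mul_cancel₀ (pow_ne_zero _ hz0), one_mul]
  rw [h5] at h4
  rw [← h4, ← mul_assoc, mul_inv_cancel₀ two_pi_I_ne, one_mul]

/-- monomial circle integrals -/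
private lemma mono_int (r : ℝ) (hr : 0 < r) (i j : ℕ) :
    (∮ w in C((0:ℂ), r), w ^ i / w ^ (j + 1))
      = if i = j then 2 * Real.pi * I else 0 := by
  have hsub : ∀ w ∈ sphere (0:ℂ) r, w ^ i / w ^ (j+1) = (w - 0) ^ ((i:ℤ) - (j+1)) := by
    intro w hw
    have hw0 : w ≠ 0 := by
      simp only [mem_sphere_iff_norm, sub_zero] at hw
      intro h; rw [h] at hw; simp at hw; exact hr.ne' hw.symm
    have hc : ((i:ℤ) - ((j:ℤ)+1)) = (i:ℤ) - ((j+1 : ℕ):ℤ) := by push_cast; ring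
    rw [sub_zero, hc, zpow_sub₀ hw0, zpow_natCast, zpow_natCast]
  rw [circleIntegral.integral_congr hr.le hsub]
  by_cases hij : i = j
  · subst hij
    rw [if_pos rfl]
    have h1 : ((i:ℤ) - (i+1)) = -1 := by ring
    rw [h1]
    have : ∀ w ∈ sphere (0:ℂ) r, (w - 0) ^ (-1 : ℤ) = (w - (0:ℂ))⁻¹ := by
      intro w _; rw [zpow_neg_one]
    rw [circleIntegral.integral_congr hr.le this,
      circleIntegral.integral_sub_inv_of_mem_ball (by simpa using hr)]
  · rw [if_neg hij, circleIntegral.integral_sub_zpow_of_ne (by omega) _ _ _]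

/-- partial fraction decomposition of 1/((z-w) w^b) -/
private lemma key_pf (b : ℕ) {z w : ℂ} (hz : z ≠ 0) (hw : w ≠ 0) (hzw : z - w ≠ 0) :
    (z - w)⁻¹ * ((w:ℂ) ^ b)⁻¹
      = (∑ j ∈ Finset.range b, (z ^ (b - j))⁻¹ * (w ^ (j + 1))⁻¹) + (z ^ b)⁻¹ * (z - w)⁻¹ := by
  induction b with
  | zero => simp
  | succ b ih =>
    have hsplit : (z - w)⁻¹ * w⁻¹ = z⁻¹ * w⁻¹ + z⁻¹ * (z - w)⁻¹ := by
      field_simp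
      ring
    have lhs : (z - w)⁻¹ * ((w:ℂ) ^ (b+1))⁻¹ = ((z - w)⁻¹ * (w ^ b)⁻¹) * w⁻¹ := by
      rw [pow_succ, mul_inv]; ring
    rw [lhs, ih, add_mul, Finset.sum_mul]
    rw [Finset.sum_range_succ']
    have e0 : (z ^ (b + 1 - 0))⁻¹ * ((w:ℂ) ^ (0 + 1))⁻¹ = (z ^ (b+1))⁻¹ * w⁻¹ := by norm_num
    rw [e0]
    have eterm : ∀ j, (z ^ (b - j))⁻¹ * ((w:ℂ) ^ (j + 1))⁻¹ * w⁻¹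
        = (z ^ (b + 1 - (j + 1)))⁻¹ * (w ^ (j + 1 + 1))⁻¹ := by
      intro j
      have : b + 1 - (j + 1) = b - j := by omega
      rw [this, pow_succ, mul_inv]; ring
    rw [Finset.sum_congr rfl fun j _ => eterm j]
    have last : (z ^ b)⁻¹ * (z - w)⁻¹ * w⁻¹
        = (z ^ (b+1))⁻¹ * w⁻¹ + (z ^ (b+1))⁻¹ * (z - w)⁻¹ := by
      rw [mul_assoc, hsplit, pow_succ, mul_inv]
      ring
    rw [last]
    ring

private lemma inner_eval (a b : ℕ) (ρ R : ℝ) (hρ : 0 < ρ) (hρR : ρ < R)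
    (F : ℂ → ℂ) (hF : Differentiable ℂ F) {z : ℂ} (hz : z ∈ sphere (0:ℂ) R) :
    (∮ w in C((0:ℂ), ρ), w / (z - w) * F (z + w) / (z ^ (a+1) * w ^ (b+1)))
    = ∑ j ∈ Finset.range b,
        (z ^ (a + b - j + 1))⁻¹ * ∮ w in C((0:ℂ), ρ), F (z + w) / w ^ (j+1) := by
  have hzR : ‖z‖ = R := by simpa using hz
  have hz0 : z ≠ 0 := by
    intro h; rw [h] at hzR; simp at hzR; exact (hρ.trans hρR).ne' hzR.symm
  have hzw : ∀ w : ℂ, ‖w‖ ≤ ρ → z - w ≠ 0 := by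
    intro w hw h
    rw [sub_eq_zero] at h
    rw [h] at hzR
    linarith
  -- continuity of the coefficient integrands
  have hFcont : ∀ j : ℕ, ContinuousOn (fun w : ℂ => F (z + w) / w ^ (j+1)) (sphere (0:ℂ) ρ) := by
    intro j
    apply ContinuousOn.div
    · exact (hF.continuous.comp (continuous_const.add continuous_id)).continuousOn
    · exact (continuous_pow _).continuousOn
    · intro w hw
      have hw0 : w ≠ 0 := by
        simp only [mem_sphere_iff_norm, sub_zero] at hw
        intro h; rw [h] at hw; simp at hw; exact hρ.ne' hw.symm
      exact pow_ne_zero _ hw0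
  have hint : ∀ j : ℕ, CircleIntegrable (fun w : ℂ => (z ^ (a + b - j + 1))⁻¹ *
      (F (z + w) / w ^ (j+1))) (0:ℂ) ρ :=
    fun j => (continuousOn_const.mul (hFcont j)).circleIntegrable hρ.le
  have hlastcont : ContinuousOn (fun w : ℂ => F (z + w) * (z - w)⁻¹) (closedBall (0:ℂ) ρ) := by
    apply ContinuousOn.mul
    · exact (hF.continuous.comp (continuous_const.add continuous_id)).continuousOn
    · refine ContinuousOn.inv₀ ((continuous_const.sub continuous_id).continuousOn) ?_
      intro w hw
      exact hzw w (by simpa [mem_closedBall_iff_norm] using hw)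
  -- rewrite the integrand
  have hcongr : ∀ w ∈ sphere (0:ℂ) ρ,
      w / (z - w) * F (z + w) / (z ^ (a+1) * w ^ (b+1))
      = (∑ j ∈ Finset.range b, (z ^ (a + b - j + 1))⁻¹ * (F (z + w) / w ^ (j+1)))
        + (z ^ (a + b + 1))⁻¹ * (F (z + w) * (z - w)⁻¹) := by
    intro w hw
    have hw0 : w ≠ 0 := by
      simp only [mem_sphere_iff_norm, sub_zero] at hw
      intro h; rw [h] at hw; simp at hw; exact hρ.ne' hw.symm
    have hzw' : z - w ≠ 0 := hzw w (by simp only [mem_sphere_iff_norm, sub_zero] at hw; exact hw.le)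
    have h1 : w / (z - w) * F (z + w) / (z ^ (a+1) * w ^ (b+1))
        = F (z + w) * (z ^ (a+1))⁻¹ * ((z - w)⁻¹ * (w ^ b)⁻¹) := by
      rw [pow_succ]
      field_simp [hw0, hz0, hzw']
      ring
    rw [h1, key_pf b hz0 hw0 hzw', mul_add, Finset.mul_sum]
    congr 1
    · refine Finset.sum_congr rfl fun j hj => ?_
      have hjb : j < b := Finset.mem_range.1 hj
      have : (z ^ (a + b - j + 1))⁻¹ = (z ^ (a+1))⁻¹ * (z ^ (b - j))⁻¹ := by
        rw [← mul_inv, ← pow_add]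
        congr 2
        omega
      rw [this, div_eq_mul_inv]
      ring
    · have : (z ^ (a + b + 1))⁻¹ = (z ^ (a+1))⁻¹ * (z ^ b)⁻¹ := by
        rw [← mul_inv, ← pow_add]
        congr 2
        omega
      rw [this]
      ring
  have hsumint : CircleIntegrable (fun w : ℂ =>
      ∑ j ∈ Finset.range b, (z ^ (a + b - j + 1))⁻¹ * (F (z + w) / w ^ (j+1))) (0:ℂ) ρ := by
    refine ContinuousOn.circleIntegrable hρ.le ?_
    exact continuousOn_finset_sum _ fun j _ => continuousOn_const.mul (hFcont j)
  have hlastint : CircleIntegrable (fun w : ℂ =>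
      (z ^ (a + b + 1))⁻¹ * (F (z + w) * (z - w)⁻¹)) (0:ℂ) ρ :=
    (continuousOn_const.mul (hlastcont.mono sphere_subset_closedBall)).circleIntegrable hρ.le
  rw [circleIntegral.integral_congr hρ.le hcongr, circle_add _ _ _ _ hsumint hlastint,
    circle_sum _ _ _ _ fun j _ => hint j]
  have hzero : (∮ w in C((0:ℂ), ρ), F (z + w) * (z - w)⁻¹) = 0 := by
    refine circleIntegral_eq_zero_of_differentiable_on_off_countable hρ.le Set.countable_empty
      hlastcont fun w hw => ?_
    have hw' : ‖w‖ < ρ := by simpa [mem_ball_iff_norm] using hw.1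
    exact ((hF.differentiableAt).comp w
      (((differentiableAt_const z).add differentiableAt_id))).mul
      (((differentiableAt_const z).sub differentiableAt_id).inv (hzw w hw'.le))
  rw [circleIntegral.integral_const_mul, hzero, mul_zero, add_zero]
  simp only [circleIntegral.integral_const_mul]

private lemma sphere_ne_zero' {r : ℝ} (hr : 0 < r) {w : ℂ} (hw : w ∈ sphere (0:ℂ) r) :
    w ≠ 0 := by
  have h : ‖w‖ = r := by simpa using hw
  intro h0; rw [h0] at h; simp at h; exact hr.ne' h.symm

private lemma contOn_div_pow (f : ℂ → ℂ) (hf : Continuous f) (r : ℝ) (hr : 0 < r) (m : ℕ) :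
    ContinuousOn (fun z : ℂ => f z / z ^ (m+1)) (sphere (0:ℂ) r) :=
  ContinuousOn.div hf.continuousOn (continuous_pow _).continuousOn
    fun w hw => pow_ne_zero _ (sphere_ne_zero' hr hw)

/-- inner coefficient integral for exp -/
private lemma exp_inner (ρ : ℝ) (hρ : 0 < ρ) (z : ℂ) (j : ℕ) :
    (∮ w in C((0:ℂ), ρ), Complex.exp (z + w) / w ^ (j+1))
      = Complex.exp z * (2 * Real.pi * I * ((j.factorial : ℂ))⁻¹) := by
  have h : ∀ w ∈ sphere (0:ℂ) ρ, Complex.exp (z + w) / w ^ (j+1)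
      = Complex.exp z * (Complex.exp w / w ^ (j+1)) := by
    intro w _
    rw [Complex.exp_add, mul_div_assoc]
  rw [circleIntegral.integral_congr hρ.le h, circleIntegral.integral_const_mul,
    exp_coeff ρ hρ j]

/-- inner coefficient integral for the monomial -/
private lemma poly_inner (ρ : ℝ) (hρ : 0 < ρ) (z : ℂ) (n j : ℕ) (hj : j ≤ n) :
    (∮ w in C((0:ℂ), ρ), (z + w) ^ n / w ^ (j+1))
      = 2 * Real.pi * I * (n.choose j : ℂ) * z ^ (n - j) := by
  have h : ∀ w ∈ sphere (0:ℂ) ρ, (z + w) ^ n / w ^ (j+1)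
      = ∑ k ∈ Finset.range (n+1), ((n.choose k : ℂ) * z ^ k) * (w ^ (n-k) / w ^ (j+1)) := by
    intro w _
    rw [add_pow, Finset.sum_div]
    refine Finset.sum_congr rfl fun k _ => ?_
    rw [div_eq_mul_inv, div_eq_mul_inv]
    ring
  rw [circleIntegral.integral_congr hρ.le h]
  have hci : ∀ k ∈ Finset.range (n+1), CircleIntegrable
      (fun w : ℂ => ((n.choose k : ℂ) * z ^ k) * (w ^ (n-k) / w ^ (j+1))) (0:ℂ) ρ :=
    fun k _ => (continuousOn_const.mul (contOn_div_pow (fun w => w ^ (n-k))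
      (continuous_pow _) ρ hρ j)).circleIntegrable hρ.le
  rw [circle_sum _ _ _ _ hci]
  simp only [circleIntegral.integral_const_mul, mono_int ρ hρ]
  rw [Finset.sum_eq_single_of_mem (n - j) (Finset.mem_range.2 (by omega))]
  · rw [if_pos (by omega), Nat.choose_symm hj]
    have : n - (n - j) = j := by omega
    ring
  · intro k hk hkn
    rw [if_neg (by simp only [Finset.mem_range] at hk; omega), mul_zero]

/-- Replacing `e^{z+w}` by the single homogeneous term `(z+w)^{a+b}/(a+b)!` of matching
degree does not change the double contour integral: for all naturals `a, b` and radii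
`0 < ρ < R`,
`(1/(2πi)²) ∮_{|z|=R} ∮_{|w|=ρ} (w/(z−w)) e^{z+w} z^{−a−1} w^{−b−1} dw dz
 = (1/(2πi)²) ∮_{|z|=R} ∮_{|w|=ρ} (w/(z−w)) ((z+w)^{a+b}/(a+b)!) z^{−a−1} w^{−b−1} dw dz`. -/
theorem contour_exp_to_power (a b : ℕ) (ρ R : ℝ) (hρ : 0 < ρ) (hρR : ρ < R) :
    (1 / (2 * (Real.pi : ℂ) * I) ^ 2) *
      (∮ z in C((0 : ℂ), R), ∮ w in C((0 : ℂ), ρ),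
        w / (z - w) * Complex.exp (z + w) / (z ^ (a + 1) * w ^ (b + 1)))
    = (1 / (2 * (Real.pi : ℂ) * I) ^ 2) *
      (∮ z in C((0 : ℂ), R), ∮ w in C((0 : ℂ), ρ),
        w / (z - w) * ((z + w) ^ (a + b) / ((a + b).factorial : ℂ)) /
          (z ^ (a + 1) * w ^ (b + 1))) := by
  have hR0 : (0:ℝ) < R := hρ.trans hρR
  have hπ := two_pi_I_ne
  -- LHS outer computation
  have hL : (∮ z in C((0 : ℂ), R), ∮ w in C((0 : ℂ), ρ),
        w / (z - w) * Complex.exp (z + w) / (z ^ (a + 1) * w ^ (b + 1)))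
      = ∑ j ∈ Finset.range b, (2 * Real.pi * I * ((j.factorial : ℂ))⁻¹)
          * (2 * Real.pi * I * (((a + b - j).factorial : ℂ))⁻¹) := by
    have hcongr : ∀ z ∈ sphere (0:ℂ) R,
        (∮ w in C((0 : ℂ), ρ), w / (z - w) * Complex.exp (z + w) / (z ^ (a + 1) * w ^ (b + 1)))
        = ∑ j ∈ Finset.range b, (2 * Real.pi * I * ((j.factorial : ℂ))⁻¹)
            * (Complex.exp z / z ^ (a + b - j + 1)) := by
      intro z hz
      rw [inner_eval a b ρ R hρ hρR Complex.exp Complex.differentiable_exp hz]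
      refine Finset.sum_congr rfl fun j _ => ?_
      rw [exp_inner ρ hρ z j, div_eq_mul_inv]
      ring
    rw [circleIntegral.integral_congr hR0.le hcongr,
      circle_sum _ (fun j z => (2 * Real.pi * I * ((j.factorial : ℂ))⁻¹)
        * (Complex.exp z / z ^ (a + b - j + 1))) _ _ (fun j _ => (continuousOn_const.mul
        (contOn_div_pow _ Complex.continuous_exp R hR0 (a + b - j))).circleIntegrable hR0.le)]
    simp only [circleIntegral.integral_const_mul]
    exact Finset.sum_congr rfl fun j _ => by rw [exp_coeff R hR0 (a + b - j)]
  -- RHS outer computation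
  have hRS : (∮ z in C((0 : ℂ), R), ∮ w in C((0 : ℂ), ρ),
        w / (z - w) * ((z + w) ^ (a + b) / ((a + b).factorial : ℂ)) /
          (z ^ (a + 1) * w ^ (b + 1)))
      = ∑ j ∈ Finset.range b, ((((a+b).factorial : ℂ))⁻¹ * (2 * Real.pi * I)
          * ((a+b).choose j : ℂ)) * (2 * Real.pi * I) := by
    have hcongr : ∀ z ∈ sphere (0:ℂ) R,
        (∮ w in C((0 : ℂ), ρ),
          w / (z - w) * ((z + w) ^ (a + b) / ((a + b).factorial : ℂ)) /
            (z ^ (a + 1) * w ^ (b + 1)))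
        = ∑ j ∈ Finset.range b, ((((a+b).factorial : ℂ))⁻¹ * (2 * Real.pi * I)
            * ((a+b).choose j : ℂ)) * (z - 0)⁻¹ := by
      intro z hz
      have hz0 : z ≠ 0 := sphere_ne_zero' hR0 hz
      have h1 := inner_eval a b ρ R hρ hρR
        (fun u => u ^ (a + b) / ((a + b).factorial : ℂ))
        ((differentiable_pow _).div_const _) hz
      rw [h1]
      refine Finset.sum_congr rfl fun j hj => ?_
      have hjb : j < b := Finset.mem_range.1 hj
      have h2 : (∮ w in C((0:ℂ), ρ),
          (z + w) ^ (a + b) / ((a + b).factorial : ℂ) / w ^ (j+1))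
          = (((a+b).factorial : ℂ))⁻¹ * ∮ w in C((0:ℂ), ρ), (z + w) ^ (a + b) / w ^ (j+1) := by
        rw [← circleIntegral.integral_const_mul]
        refine circleIntegral.integral_congr hρ.le fun w _ => ?_
        rw [div_div, div_eq_mul_inv, div_eq_mul_inv]
        ring
      rw [h2, poly_inner ρ hρ z (a+b) j (by omega)]
      have h3 : (z ^ (a + b - j + 1))⁻¹ * z ^ (a + b - j) = z⁻¹ := by
        rw [pow_succ, mul_inv]
        field_simp
      rw [sub_zero]
      calc (z ^ (a + b - j + 1))⁻¹ *
            ((((a+b).factorial : ℂ))⁻¹ * (2 * Real.pi * I * ((a+b).choose j : ℂ) * z ^ (a + b - j)))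
          = ((((a+b).factorial : ℂ))⁻¹ * (2 * Real.pi * I) * ((a+b).choose j : ℂ))
            * ((z ^ (a + b - j + 1))⁻¹ * z ^ (a + b - j)) := by ring
        _ = _ := by rw [h3]
    have hci : ∀ j ∈ Finset.range b, CircleIntegrable (fun z : ℂ =>
        ((((a+b).factorial : ℂ))⁻¹ * (2 * Real.pi * I) * ((a+b).choose j : ℂ)) * (z - 0)⁻¹)
        (0:ℂ) R := by
      intro j _
      refine ContinuousOn.circleIntegrable hR0.le (continuousOn_const.mul
        (ContinuousOn.inv₀ (continuous_id.sub continuous_const).continuousOn fun w hw => ?_))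
      rw [sub_zero]
      exact sphere_ne_zero' hR0 hw
    rw [circleIntegral.integral_congr hR0.le hcongr, circle_sum _ _ _ _ hci]
    simp only [circleIntegral.integral_const_mul]
    refine Finset.sum_congr rfl fun j _ => ?_
    rw [circleIntegral.integral_sub_center_inv (0:ℂ) hR0.ne']
  rw [hL, hRS]
  congr 1
  refine Finset.sum_congr rfl fun j hj => ?_
  have hjab : j ≤ a + b := by
    have := Finset.mem_range.1 hj; omega
  have hc := Nat.choose_mul_factorial_mul_factorial hjab
  have hcC : ((a+b).choose j : ℂ) * (j.factorial : ℂ) * (((a+b-j).factorial : ℂ))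
      = (((a+b).factorial : ℂ)) := by exact_mod_cast congrArg (Nat.cast : ℕ → ℂ) hc
  have hj0 : (j.factorial : ℂ) ≠ 0 := Nat.cast_ne_zero.2 (Nat.factorial_ne_zero j)
  have hab0 : (((a+b).factorial : ℂ)) ≠ 0 := Nat.cast_ne_zero.2 (Nat.factorial_ne_zero _)
  have habj0 : (((a+b-j).factorial : ℂ)) ≠ 0 := Nat.cast_ne_zero.2 (Nat.factorial_ne_zero _)
  field_simp
  linear_combination (-1 : ℂ) * hcC
end
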